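/- Prenex sentences admit validity-equivalent and 1-satisfiability-equivalent standard Skolemizations: let V be a Gödel set, L a language, f an n-ary function symbol not in L, and F(x₁,…,xₙ,y) an L-formula. Then (1) the sentence ∃x₁⋯∃xₙ∀y F(x̄,y) is valid in G_V over L-interpretations if and only if ∃x₁⋯∃xₙ F(x̄, f(x̄)) is valid in G_V over (L ∪ {f})-interpretations; and (2) the sentence ∀x₁⋯∀xₙ∃y F(x̄,y) is 1-satisfiable in G_V if and only if ∀x₁⋯∀xₙ F(x̄, f(x̄)) is 1-satisfiable in G_V over the extended language. -/

import Mathlib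

namespace GodelPaper

/-- A first-order language: function and relation symbols of each arity. -/
structure Lang where
  Func : ℕ → Type
  Rel : ℕ → Type

/-- A Gödel set: a closed subset of [0,1] containing 0 and 1. -/
def GodelSet (V : Set ℝ) : Prop :=
  IsClosed V ∧ V ⊆ Set.Icc 0 1 ∧ (0:ℝ) ∈ V ∧ (1:ℝ) ∈ V

/-- Terms with variables from `α`. -/
inductive Term (L : Lang) (α : Type) : Type
  | var : α → Term L α
  | func : ∀ {k}, L.Func k → (Fin k → Term L α) → Term L α

/-- A `V`-interpretation: nonempty domain, interpretation of function symbols,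
and truth values in `V` for atomic sentences with parameters. -/
structure Interp (L : Lang) (V : Set ℝ) where
  Dom : Type
  dom_nonempty : Nonempty Dom
  funMap : ∀ {k}, L.Func k → (Fin k → Dom) → Dom
  relVal : ∀ {k}, L.Rel k → (Fin k → Dom) → ℝ
  relVal_mem : ∀ {k} (R : L.Rel k) (v : Fin k → Dom), relVal R v ∈ V

def Term.eval {L : Lang} {V : Set ℝ} (I : Interp L V) {α : Type} (v : α → I.Dom) :
    Term L α → I.Dom
  | .var i => v i
  | .func f ts => I.funMap f fun j => Term.eval I v (ts j)

/-- Formulas of the Δ-extended language, with free variables among `Fin n`.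
The quantifiers bind the *last* variable. Δ-free formulas (i.e. formulas of the
plain language) are singled out by the predicate `DeltaFree` below. -/
inductive Form (L : Lang) : ℕ → Type
  | falsum : ∀ {n}, Form L n
  | atom : ∀ {n k}, L.Rel k → (Fin k → Term L (Fin n)) → Form L n
  | conj : ∀ {n}, Form L n → Form L n → Form L n
  | disj : ∀ {n}, Form L n → Form L n → Form L n
  | impl : ∀ {n}, Form L n → Form L n → Form L n
  | delta : ∀ {n}, Form L n → Form L n
  | all : ∀ {n}, Form L (n+1) → Form L n
  | ex : ∀ {n}, Form L (n+1) → Form L n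

/-- The Gödel truth value of a formula under an interpretation and an
assignment of the free variables. -/
noncomputable def Form.val {L : Lang} {V : Set ℝ} (I : Interp L V) :
    ∀ {n}, Form L n → (Fin n → I.Dom) → ℝ
  | _, .falsum, _ => 0
  | _, .atom R ts, ρ => I.relVal R fun j => Term.eval I ρ (ts j)
  | _, .conj A B, ρ => min (Form.val I A ρ) (Form.val I B ρ)
  | _, .disj A B, ρ => max (Form.val I A ρ) (Form.val I B ρ)
  | _, .impl A B, ρ => if Form.val I A ρ ≤ Form.val I B ρ then 1 else Form.val I B ρ
  | _, .delta A, ρ => if Form.val I A ρ = 1 then 1 else 0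
  | _, .all A, ρ => sInf {v : ℝ | ∃ d : I.Dom, v = Form.val I A (Fin.snoc ρ d)}
  | _, .ex A, ρ => sSup {v : ℝ | ∃ d : I.Dom, v = Form.val I A (Fin.snoc ρ d)}

/-- The value of a sentence. -/
noncomputable def Form.sval {L : Lang} {V : Set ℝ} (I : Interp L V) (A : Form L 0) : ℝ :=
  Form.val I A Fin.elim0

/-- `A` is valid in `G_V`. -/
def Valid {L : Lang} (V : Set ℝ) (A : Form L 0) : Prop :=
  ∀ I : Interp L V, Form.sval I A = 1

/-- `A` is 1-satisfiable in `G_V`. -/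
def OneSat {L : Lang} (V : Set ℝ) (A : Form L 0) : Prop :=
  ∃ I : Interp L V, Form.sval I A = 1

/-- `A` is classically satisfiable: it takes value 1 under a `V`-interpretation
assigning only values in {0,1} to atomic sentences. -/
def ClassSat {L : Lang} (V : Set ℝ) (A : Form L 0) : Prop :=
  ∃ I : Interp L V,
    (∀ {k : ℕ} (R : L.Rel k) (v : Fin k → I.Dom), I.relVal R v = 0 ∨ I.relVal R v = 1) ∧
    Form.sval I A = 1

/-- ¬A abbreviates A ⊃ ⊥. -/
def Form.not {L : Lang} {n : ℕ} (A : Form L n) : Form L n := Form.impl A Form.falsum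

/-- A ↔ B abbreviates (A ⊃ B) ∧ (B ⊃ A). -/
def Form.iff {L : Lang} {n : ℕ} (A B : Form L n) : Form L n :=
  Form.conj (Form.impl A B) (Form.impl B A)

/-- Formulas of the plain language (no Δ). -/
def DeltaFree {L : Lang} : ∀ {n}, Form L n → Prop
  | _, .falsum => True
  | _, .atom _ _ => True
  | _, .conj A B => DeltaFree A ∧ DeltaFree B
  | _, .disj A B => DeltaFree A ∧ DeltaFree B
  | _, .impl A B => DeltaFree A ∧ DeltaFree B
  | _, .delta _ => False
  | _, .all A => DeltaFree A
  | _, .ex A => DeltaFree A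

/-- Quantifier-free formulas. -/
def QuantFree {L : Lang} : ∀ {n}, Form L n → Prop
  | _, .falsum => True
  | _, .atom _ _ => True
  | _, .conj A B => QuantFree A ∧ QuantFree B
  | _, .disj A B => QuantFree A ∧ QuantFree B
  | _, .impl A B => QuantFree A ∧ QuantFree B
  | _, .delta A => QuantFree A
  | _, .all _ => False
  | _, .ex _ => False

/-- Formulas containing no universal quantifier. -/
def AllFree {L : Lang} : ∀ {n}, Form L n → Prop
  | _, .falsum => True
  | _, .atom _ _ => True
  | _, .conj A B => AllFree A ∧ AllFree B
  | _, .disj A B => AllFree A ∧ AllFree B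
  | _, .impl A B => AllFree A ∧ AllFree B
  | _, .delta A => AllFree A
  | _, .all _ => False
  | _, .ex A => AllFree A

/-- Prenex formulas: a block of quantifiers followed by a quantifier-free matrix. -/
inductive IsPrenex {L : Lang} : ∀ {n}, Form L n → Prop
  | qf {n} {A : Form L n} : QuantFree A → IsPrenex A
  | all {n} {A : Form L (n+1)} : IsPrenex A → IsPrenex (Form.all A)
  | ex {n} {A : Form L (n+1)} : IsPrenex A → IsPrenex (Form.ex A)

/-- Purely existential prenex formulas. -/
inductive ExPrenex {L : Lang} : ∀ {n}, Form L n → Prop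
  | qf {n} {A : Form L n} : QuantFree A → ExPrenex A
  | ex {n} {A : Form L (n+1)} : ExPrenex A → ExPrenex (Form.ex A)

/-- The glued interpretation `I_ω`: atoms with value ≤ ω keep their value,
all other atoms get value 1. Same domain and function interpretations. -/
noncomputable def Interp.glue {L : Lang} {V : Set ℝ} (I : Interp L V) (ω : ℝ)
    (h1 : (1:ℝ) ∈ V) : Interp L V where
  Dom := I.Dom
  dom_nonempty := I.dom_nonempty
  funMap := fun {k} f v => I.funMap f v
  relVal := fun {k} R v => if I.relVal R v ≤ ω then I.relVal R v else 1
  relVal_mem := fun {k} R v => by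
    by_cases h : I.relVal R v ≤ ω
    · simpa [h] using I.relVal_mem R v
    · simpa [h] using h1

/-- The Gödel set `V_↑ = {1 - 1/k : k ≥ 1} ∪ {1}`. -/
def Vup : Set ℝ := {x : ℝ | ∃ k : ℕ, 1 ≤ k ∧ x = 1 - 1/(k:ℝ)} ∪ {1}

/-- The `m`-element Gödel set `V_m = {1 - 1/k : 1 ≤ k ≤ m-1} ∪ {1}`. -/
def Vfin (m : ℕ) : Set ℝ :=
  {x : ℝ | ∃ k : ℕ, 1 ≤ k ∧ k ≤ m - 1 ∧ x = 1 - 1/(k:ℝ)} ∪ {1}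

/-- Atomic formula built from a unary predicate. -/
def atom1 {L : Lang} (P : L.Rel 1) {n : ℕ} (t : Term L (Fin n)) : Form L n :=
  Form.atom P fun _ => t

/-- Atomic formula built from a 0-ary predicate (propositional atom). -/
def atom0 {L : Lang} (X : L.Rel 0) {n : ℕ} : Form L n :=
  Form.atom X fun i => i.elim0

def Term.rename {L : Lang} {α β : Type} (f : α → β) : Term L α → Term L β
  | .var i => .var (f i)
  | .func g ts => .func g fun j => Term.rename f (ts j)

def Form.rename {L : Lang} : ∀ {m n}, (Fin m → Fin n) → Form L m → Form L n
  | _, _, _, .falsum => .falsum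
  | _, _, f, .atom R ts => .atom R fun j => (ts j).rename f
  | _, _, f, .conj A B => .conj (A.rename f) (B.rename f)
  | _, _, f, .disj A B => .disj (A.rename f) (B.rename f)
  | _, _, f, .impl A B => .impl (A.rename f) (B.rename f)
  | _, _, f, .delta A => .delta (A.rename f)
  | _, _, f, .all A =>
      .all (A.rename (Fin.lastCases (Fin.last _) fun i => Fin.castSucc (f i)))
  | _, _, f, .ex A =>
      .ex (A.rename (Fin.lastCases (Fin.last _) fun i => Fin.castSucc (f i)))

/-- Weakening: regard a formula with `n` free variables as one with `n+1`
free variables (not using the new last variable). -/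
def Form.lift {L : Lang} {n : ℕ} (A : Form L n) : Form L (n+1) :=
  A.rename Fin.castSucc

def Term.subst {L : Lang} {α β : Type} (σ : α → Term L β) : Term L α → Term L β
  | .var i => σ i
  | .func g ts => .func g fun j => Term.subst σ (ts j)

def Form.subst {L : Lang} : ∀ {m n}, (Fin m → Term L (Fin n)) → Form L m → Form L n
  | _, _, _, .falsum => .falsum
  | _, _, σ, .atom R ts => .atom R fun j => (ts j).subst σ
  | _, _, σ, .conj A B => .conj (A.subst σ) (B.subst σ)
  | _, _, σ, .disj A B => .disj (A.subst σ) (B.subst σ)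
  | _, _, σ, .impl A B => .impl (A.subst σ) (B.subst σ)
  | _, _, σ, .delta A => .delta (A.subst σ)
  | _, _, σ, .all A =>
      .all (A.subst (Fin.lastCases (.var (Fin.last _))
        fun i => (σ i).rename Fin.castSucc))
  | _, _, σ, .ex A =>
      .ex (A.subst (Fin.lastCases (.var (Fin.last _))
        fun i => (σ i).rename Fin.castSucc))

/-- The language `L ∪ {f}` with one new function symbol of arity `a`. -/
def Lang.addFunc (L : Lang) (a : ℕ) : Lang where
  Func := fun k => L.Func k ⊕ PLift (k = a)
  Rel := L.Rel

/-- The new function symbol of `L.addFunc a`. -/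
def newFunc (L : Lang) (a : ℕ) : (L.addFunc a).Func a := Sum.inr ⟨rfl⟩

def Term.emb {L : Lang} {a : ℕ} {α : Type} : Term L α → Term (L.addFunc a) α
  | .var i => .var i
  | .func g ts => .func (Sum.inl g) fun j => Term.emb (ts j)

/-- Embedding of `L`-formulas into the language with the extra function symbol. -/
def Form.emb {L : Lang} {a : ℕ} : ∀ {n}, Form L n → Form (L.addFunc a) n
  | _, .falsum => .falsum
  | _, .atom R ts => .atom R fun j => (ts j).emb
  | _, .conj A B => .conj A.emb B.emb
  | _, .disj A B => .disj A.emb B.emb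
  | _, .impl A B => .impl A.emb B.emb
  | _, .delta A => .delta A.emb
  | _, .all A => .all A.emb
  | _, .ex A => .ex A.emb

/-- Prefix of `n` existential quantifiers (outermost quantifier binds variable 0). -/
def Form.exN {L : Lang} : ∀ n, Form L n → Form L 0
  | 0, A => A
  | n+1, A => Form.exN n (Form.ex A)

/-- Prefix of `n` universal quantifiers (outermost quantifier binds variable 0). -/
def Form.allN {L : Lang} : ∀ n, Form L n → Form L 0
  | 0, A => A
  | n+1, A => Form.allN n (Form.all A)

section Aux
variable {L : Lang} {V : Set ℝ}

lemma val_bounds (hV : GodelSet V) (I : Interp L V) :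
    ∀ {n} (A : Form L n) (ρ : Fin n → I.Dom), 0 ≤ A.val I ρ ∧ A.val I ρ ≤ 1 := by
  intro n A
  induction A with
  | falsum => intro ρ; simp [Form.val]
  | atom R ts =>
      intro ρ
      have := hV.2.1 (I.relVal_mem R fun j => Term.eval I ρ (ts j))
      simpa [Form.val] using ⟨this.1, this.2⟩
  | conj A B ihA ihB =>
      intro ρ
      obtain ⟨a1, a2⟩ := ihA ρ; obtain ⟨b1, b2⟩ := ihB ρ
      refine ⟨?_, ?_⟩
      · simp only [Form.val, le_min_iff]; exact ⟨a1, b1⟩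
      · simp only [Form.val, min_le_iff]; exact Or.inl a2
  | disj A B ihA ihB =>
      intro ρ
      obtain ⟨a1, a2⟩ := ihA ρ; obtain ⟨b1, b2⟩ := ihB ρ
      refine ⟨?_, ?_⟩
      · simp only [Form.val, le_max_iff]; exact Or.inl a1
      · simp only [Form.val, max_le_iff]; exact ⟨a2, b2⟩
  | impl A B ihA ihB =>
      intro ρ
      obtain ⟨b1, b2⟩ := ihB ρ
      by_cases h : A.val I ρ ≤ B.val I ρ <;> simp [Form.val, h]
      exact ⟨b1, b2⟩
  | delta A ih =>
      intro ρ
      by_cases h : A.val I ρ = 1 <;> simp [Form.val, h]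
  | all A ih =>
      intro ρ
      obtain ⟨d⟩ := I.dom_nonempty
      have hne : {v : ℝ | ∃ d : I.Dom, v = A.val I (Fin.snoc ρ d)}.Nonempty :=
        ⟨_, d, rfl⟩
      constructor
      · rw [Form.val]
        exact le_csInf hne (by rintro v ⟨e, rfl⟩; exact (ih _).1)
      · rw [Form.val]
        refine le_trans (csInf_le ⟨0, ?_⟩ ⟨d, rfl⟩) (ih _).2
        rintro v ⟨e, rfl⟩; exact (ih _).1
  | ex A ih =>
      intro ρ
      obtain ⟨d⟩ := I.dom_nonempty
      have hne : {v : ℝ | ∃ d : I.Dom, v = A.val I (Fin.snoc ρ d)}.Nonempty :=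
        ⟨_, d, rfl⟩
      constructor
      · rw [Form.val]
        refine le_trans (ih (Fin.snoc ρ d)).1 (le_csSup ⟨1, ?_⟩ ⟨d, rfl⟩)
        rintro v ⟨e, rfl⟩; exact (ih _).2
      · rw [Form.val]
        exact csSup_le hne (by rintro v ⟨e, rfl⟩; exact (ih _).2)

lemma csInf_mem_of_subset {S : Set ℝ} (hV : GodelSet V) (hS : S ⊆ V)
    (hne : S.Nonempty) : sInf S ∈ V := by
  have hbb : BddBelow S := ⟨0, fun x hx => (hV.2.1 (hS hx)).1⟩
  have := csInf_mem_closure hne hbb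
  have h2 : closure S ⊆ V := hV.1.closure_eq ▸ closure_mono hS
  exact h2 this

lemma csSup_mem_of_subset {S : Set ℝ} (hV : GodelSet V) (hS : S ⊆ V)
    (hne : S.Nonempty) : sSup S ∈ V := by
  have hbb : BddAbove S := ⟨1, fun x hx => (hV.2.1 (hS hx)).2⟩
  have := csSup_mem_closure hne hbb
  have h2 : closure S ⊆ V := hV.1.closure_eq ▸ closure_mono hS
  exact h2 this

lemma val_mem (hV : GodelSet V) (I : Interp L V) :
    ∀ {n} (A : Form L n), DeltaFree A → ∀ (ρ : Fin n → I.Dom), A.val I ρ ∈ V := by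
  intro n A
  induction A with
  | falsum => intro _ ρ; simpa [Form.val] using hV.2.2.1
  | atom R ts => intro _ ρ; exact I.relVal_mem R _
  | conj A B ihA ihB =>
      intro h ρ
      rcases le_total (A.val I ρ) (B.val I ρ) with hle | hle
      · simpa [Form.val, hle] using ihA h.1 ρ
      · simpa [Form.val, hle] using ihB h.2 ρ
  | disj A B ihA ihB =>
      intro h ρ
      rcases le_total (A.val I ρ) (B.val I ρ) with hle | hle
      · simpa [Form.val, hle] using ihB h.2 ρ
      · simpa [Form.val, hle] using ihA h.1 ρ
  | impl A B ihA ihB =>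
      intro h ρ
      by_cases hle : A.val I ρ ≤ B.val I ρ
      · simpa [Form.val, hle] using hV.2.2.2
      · simpa [Form.val, hle] using ihB h.2 ρ
  | delta A ih => intro h; exact absurd h (by simp [DeltaFree])
  | all A ih =>
      intro h ρ
      rw [Form.val]
      obtain ⟨d⟩ := I.dom_nonempty
      exact csInf_mem_of_subset hV (by rintro v ⟨e, rfl⟩; exact ih h _) ⟨_, d, rfl⟩
  | ex A ih =>
      intro h ρ
      rw [Form.val]
      obtain ⟨d⟩ := I.dom_nonempty
      exact csSup_mem_of_subset hV (by rintro v ⟨e, rfl⟩; exact ih h _) ⟨_, d, rfl⟩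

lemma deltaFree_rename : ∀ {m n} (f : Fin m → Fin n) (A : Form L m),
    DeltaFree A → DeltaFree (A.rename f) := by
  intro m n f A
  induction A generalizing n with
  | falsum => intro _; trivial
  | atom R ts => intro _; trivial
  | conj A B ihA ihB => exact fun h => ⟨ihA _ h.1, ihB _ h.2⟩
  | disj A B ihA ihB => exact fun h => ⟨ihA _ h.1, ihB _ h.2⟩
  | impl A B ihA ihB => exact fun h => ⟨ihA _ h.1, ihB _ h.2⟩
  | delta A ih => exact fun h => absurd h (by simp [DeltaFree])
  | all A ih => exact fun h => ih _ h
  | ex A ih => exact fun h => ih _ h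

lemma deltaFree_subst : ∀ {m n} (σ : Fin m → Term L (Fin n)) (A : Form L m),
    DeltaFree A → DeltaFree (A.subst σ) := by
  intro m n σ A
  induction A generalizing n with
  | falsum => intro _; trivial
  | atom R ts => intro _; trivial
  | conj A B ihA ihB => exact fun h => ⟨ihA _ h.1, ihB _ h.2⟩
  | disj A B ihA ihB => exact fun h => ⟨ihA _ h.1, ihB _ h.2⟩
  | impl A B ihA ihB => exact fun h => ⟨ihA _ h.1, ihB _ h.2⟩
  | delta A ih => exact fun h => absurd h (by simp [DeltaFree])
  | all A ih => exact fun h => ih _ h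
  | ex A ih => exact fun h => ih _ h

lemma deltaFree_emb {a : ℕ} : ∀ {n} (A : Form L n),
    DeltaFree A → DeltaFree (Form.emb (a := a) A) := by
  intro n A
  induction A with
  | falsum => intro _; trivial
  | atom R ts => intro _; trivial
  | conj A B ihA ihB => exact fun h => ⟨ihA h.1, ihB h.2⟩
  | disj A B ihA ihB => exact fun h => ⟨ihA h.1, ihB h.2⟩
  | impl A B ihA ihB => exact fun h => ⟨ihA h.1, ihB h.2⟩
  | delta A ih => exact fun h => absurd h (by simp [DeltaFree])
  | all A ih => exact ih
  | ex A ih => exact ih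

lemma Term.eval_rename (I : Interp L V) {α β : Type} (f : α → β) (v : β → I.Dom) :
    ∀ t : Term L α, (t.rename f).eval I v = t.eval I (v ∘ f) := by
  intro t
  induction t with
  | var i => rfl
  | func g ts ih => simp only [Term.rename, Term.eval]; congr 1; funext j; exact ih j

lemma Term.eval_subst (I : Interp L V) {α β : Type} (σ : α → Term L β) (v : β → I.Dom) :
    ∀ t : Term L α, (t.subst σ).eval I v = t.eval I (fun i => (σ i).eval I v) := by
  intro t
  induction t with
  | var i => rfl
  | func g ts ih => simp only [Term.subst, Term.eval]; congr 1; funext j; exact ih j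

lemma Form.val_subst (I : Interp L V) :
    ∀ {m n} (σ : Fin m → Term L (Fin n)) (A : Form L m) (ρ : Fin n → I.Dom),
      (A.subst σ).val I ρ = A.val I (fun i => (σ i).eval I ρ) := by
  intro m n σ A
  induction A generalizing n with
  | falsum => intro ρ; rfl
  | atom R ts =>
      intro ρ
      simp only [Form.subst, Form.val]
      congr 1; funext j; exact Term.eval_subst I σ ρ (ts j)
  | conj A B ihA ihB => intro ρ; simp only [Form.subst, Form.val, ihA, ihB]
  | disj A B ihA ihB => intro ρ; simp only [Form.subst, Form.val, ihA, ihB]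
  | impl A B ihA ihB => intro ρ; simp only [Form.subst, Form.val, ihA, ihB]
  | delta A ih => intro ρ; simp only [Form.subst, Form.val, ih]
  | all A ih =>
      intro ρ
      simp only [Form.subst, Form.val]
      congr 1; ext v
      constructor <;> rintro ⟨d, rfl⟩ <;> refine ⟨d, ?_⟩ <;> rw [ih]
      · congr 1; funext i
        refine Fin.lastCases ?_ (fun j => ?_) i
        · simp [Fin.snoc_last, Term.eval]
        · simp only [Fin.lastCases_castSucc, Fin.snoc_castSucc]
          rw [Term.eval_rename]
          congr 1; funext r; simp [Function.comp, Fin.snoc_castSucc]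
      · congr 1; funext i
        refine Fin.lastCases ?_ (fun j => ?_) i
        · simp [Fin.snoc_last, Term.eval]
        · simp only [Fin.lastCases_castSucc, Fin.snoc_castSucc]
          rw [Term.eval_rename]
          congr 1; funext r; simp [Function.comp, Fin.snoc_castSucc]
  | ex A ih =>
      intro ρ
      simp only [Form.subst, Form.val]
      congr 1; ext v
      constructor <;> rintro ⟨d, rfl⟩ <;> refine ⟨d, ?_⟩ <;> rw [ih]
      · congr 1; funext i
        refine Fin.lastCases ?_ (fun j => ?_) i
        · simp [Fin.snoc_last, Term.eval]
        · simp only [Fin.lastCases_castSucc, Fin.snoc_castSucc]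
          rw [Term.eval_rename]
          congr 1; funext r; simp [Function.comp, Fin.snoc_castSucc]
      · congr 1; funext i
        refine Fin.lastCases ?_ (fun j => ?_) i
        · simp [Fin.snoc_last, Term.eval]
        · simp only [Fin.lastCases_castSucc, Fin.snoc_castSucc]
          rw [Term.eval_rename]
          congr 1; funext r; simp [Function.comp, Fin.snoc_castSucc]
/-- Reduct of an interpretation of the extended language. -/
def Interp.reduct {a : ℕ} (J : Interp (L.addFunc a) V) : Interp L V where
  Dom := J.Dom
  dom_nonempty := J.dom_nonempty
  funMap := fun {k} f v => J.funMap (Sum.inl f) v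
  relVal := fun {k} R v => J.relVal R v
  relVal_mem := fun {k} R v => J.relVal_mem R v

lemma Term.eval_emb {a : ℕ} (J : Interp (L.addFunc a) V) {α : Type}
    (v : α → J.Dom) : ∀ t : Term L α,
      Term.eval J v (Term.emb (a := a) t) = Term.eval J.reduct v t := by
  intro t
  induction t with
  | var i => rfl
  | func g ts ih =>
      simp only [Term.emb, Term.eval]
      show J.funMap (Sum.inl g) _ = _
      congr 1; funext j; exact ih j

lemma Form.val_emb {a : ℕ} (J : Interp (L.addFunc a) V) :
    ∀ {n} (A : Form L n) (ρ : Fin n → J.Dom),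
      Form.val J (Form.emb (a := a) A) ρ = Form.val J.reduct A ρ := by
  intro n A
  induction A with
  | falsum => intro ρ; rfl
  | atom R ts =>
      intro ρ
      simp only [Form.emb, Form.val]
      show J.relVal R _ = J.relVal R _
      congr 1; funext j; exact Term.eval_emb J ρ (ts j)
  | conj A B ihA ihB => intro ρ; simp only [Form.emb, Form.val, ihA, ihB]
  | disj A B ihA ihB => intro ρ; simp only [Form.emb, Form.val, ihA, ihB]
  | impl A B ihA ihB => intro ρ; simp only [Form.emb, Form.val, ihA, ihB]
  | delta A ih => intro ρ; simp only [Form.emb, Form.val, ih]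
  | all A ih =>
      intro ρ; simp only [Form.emb, Form.val]
      congr 1; ext v
      constructor <;> rintro ⟨d, rfl⟩ <;> exact ⟨d, by rw [ih]; rfl⟩
  | ex A ih =>
      intro ρ; simp only [Form.emb, Form.val]
      congr 1; ext v
      constructor <;> rintro ⟨d, rfl⟩ <;> exact ⟨d, by rw [ih]; rfl⟩

/-- Expansion of an `L`-interpretation by an interpretation of the new symbol. -/
def Interp.expand {a : ℕ} (I : Interp L V) (g : (Fin a → I.Dom) → I.Dom) :
    Interp (L.addFunc a) V where
  Dom := I.Dom
  dom_nonempty := I.dom_nonempty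
  funMap := fun {k} f v =>
    match f with
    | Sum.inl f => I.funMap f v
    | Sum.inr e => g (fun j => v (Fin.cast e.down.symm j))
  relVal := fun {k} R v => I.relVal R v
  relVal_mem := fun {k} R v => I.relVal_mem R v

lemma Interp.expand_reduct {a : ℕ} (I : Interp L V) (g : (Fin a → I.Dom) → I.Dom) :
    (I.expand g).reduct = I := rfl

lemma Interp.expand_newFunc {a : ℕ} (I : Interp L V) (g : (Fin a → I.Dom) → I.Dom)
    (v : Fin a → I.Dom) : (I.expand g).funMap (newFunc L a) v = g v := rfl

/-- Iterated supremum. -/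
noncomputable def supN (D : Type) : ∀ n, ((Fin n → D) → ℝ) → ℝ
  | 0, G => G Fin.elim0
  | n+1, G => supN D n fun ρ => sSup {v | ∃ d : D, v = G (Fin.snoc ρ d)}

/-- Iterated infimum. -/
noncomputable def infN (D : Type) : ∀ n, ((Fin n → D) → ℝ) → ℝ
  | 0, G => G Fin.elim0
  | n+1, G => infN D n fun ρ => sInf {v | ∃ d : D, v = G (Fin.snoc ρ d)}

lemma sval_exN (I : Interp L V) : ∀ {n} (A : Form L n),
    Form.sval I (Form.exN n A) = supN I.Dom n (fun ρ => A.val I ρ) := by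
  intro n
  induction n with
  | zero => intro A; rfl
  | succ n ih =>
      intro A
      show Form.sval I (Form.exN n (Form.ex A)) = _
      rw [ih (Form.ex A)]
      rfl

lemma sval_allN (I : Interp L V) : ∀ {n} (A : Form L n),
    Form.sval I (Form.allN n A) = infN I.Dom n (fun ρ => A.val I ρ) := by
  intro n
  induction n with
  | zero => intro A; rfl
  | succ n ih =>
      intro A
      show Form.sval I (Form.allN n (Form.all A)) = _
      rw [ih (Form.all A)]
      rfl

variable {D : Type} [hD : Nonempty D]

lemma supN_le {n : ℕ} {G : (Fin n → D) → ℝ} {b : ℝ} (hb : ∀ ρ, G ρ ≤ b) :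
    supN D n G ≤ b := by
  induction n with
  | zero => exact hb _
  | succ n ih =>
      refine ih (fun ρ => ?_)
      obtain ⟨d⟩ := hD
      exact csSup_le ⟨_, d, rfl⟩ (by rintro v ⟨e, rfl⟩; exact hb _)

lemma le_supN {n : ℕ} {G : (Fin n → D) → ℝ} (hb : ∀ ρ, G ρ ≤ 1) (ρ : Fin n → D) :
    G ρ ≤ supN D n G := by
  induction n with
  | zero =>
      have : ρ = Fin.elim0 := funext fun i => i.elim0
      rw [this]; exact le_rfl
  | succ n ih =>
      set G' : (Fin n → D) → ℝ := fun τ => sSup {v | ∃ d : D, v = G (Fin.snoc τ d)}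
      have h1 : G ρ ≤ G' (Fin.init ρ) := by
        refine le_csSup ⟨1, by rintro v ⟨e, rfl⟩; exact hb _⟩ ?_
        exact ⟨ρ (Fin.last n), by rw [Fin.snoc_init_self]⟩
      have h2 : ∀ τ, G' τ ≤ 1 := fun τ => by
        obtain ⟨d⟩ := hD
        exact csSup_le ⟨_, d, rfl⟩ (by rintro v ⟨e, rfl⟩; exact hb _)
      exact le_trans h1 (ih (G := G') h2 (Fin.init ρ))

lemma supN_mono {n : ℕ} {G H : (Fin n → D) → ℝ} (hb : ∀ ρ, H ρ ≤ 1)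
    (hGH : ∀ ρ, G ρ ≤ H ρ) : supN D n G ≤ supN D n H := by
  induction n with
  | zero => exact hGH _
  | succ n ih =>
      refine ih (fun τ => ?_) (fun τ => ?_)
      · obtain ⟨d⟩ := hD
        exact csSup_le ⟨_, d, rfl⟩ (by rintro v ⟨e, rfl⟩; exact hb _)
      · obtain ⟨d⟩ := hD
        refine csSup_le ⟨_, d, rfl⟩ ?_
        rintro v ⟨e, rfl⟩
        refine le_trans (hGH _) (le_csSup ⟨1, ?_⟩ ⟨e, rfl⟩)
        rintro w ⟨e', rfl⟩; exact hb _

lemma sInf_eq_one_iff {S : Set ℝ} (hne : S.Nonempty) (h0 : ∀ x ∈ S, 0 ≤ x)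
    (h1 : ∀ x ∈ S, x ≤ 1) : sInf S = 1 ↔ ∀ x ∈ S, x = 1 := by
  constructor
  · intro h x hx
    have : sInf S ≤ x := csInf_le ⟨0, fun y hy => h0 y hy⟩ hx
    exact le_antisymm (h1 x hx) (h ▸ this)
  · intro h
    obtain ⟨x, hx⟩ := id hne
    refine le_antisymm ?_ (le_csInf hne fun y hy => (h y hy).ge)
    exact le_trans (csInf_le ⟨0, fun y hy => h0 y hy⟩ hx) (h x hx).le

lemma infN_eq_one_iff {n : ℕ} {G : (Fin n → D) → ℝ} (h0 : ∀ ρ, 0 ≤ G ρ)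
    (h1 : ∀ ρ, G ρ ≤ 1) : infN D n G = 1 ↔ ∀ ρ, G ρ = 1 := by
  induction n with
  | zero =>
      constructor
      · intro h ρ
        have : ρ = Fin.elim0 := funext fun i => i.elim0
        rw [this]; exact h
      · intro h; exact h _
  | succ n ih =>
      set G' : (Fin n → D) → ℝ := fun τ => sInf {v | ∃ d : D, v = G (Fin.snoc τ d)}
      obtain ⟨d₀⟩ := hD
      have hstep : ∀ τ, (G' τ = 1 ↔ ∀ d : D, G (Fin.snoc τ d) = 1) := by
        intro τ
        rw [sInf_eq_one_iff (S := {v | ∃ d : D, v = G (Fin.snoc τ d)}) ⟨_, ⟨d₀, rfl⟩⟩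
          (by rintro v ⟨e, rfl⟩; exact h0 _) (by rintro v ⟨e, rfl⟩; exact h1 _)]
        constructor
        · intro h d; exact h _ ⟨d, rfl⟩
        · rintro h v ⟨e, rfl⟩; exact h e
      have hG'0 : ∀ τ, 0 ≤ G' τ := fun τ =>
        le_csInf ⟨_, d₀, rfl⟩ (by rintro v ⟨e, rfl⟩; exact h0 _)
      have hG'1 : ∀ τ, G' τ ≤ 1 := fun τ =>
        le_trans (csInf_le ⟨0, by rintro v ⟨e, rfl⟩; exact h0 _⟩ ⟨d₀, rfl⟩) (h1 _)
      show infN D n G' = 1 ↔ _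
      rw [ih (G := G') hG'0 hG'1]
      constructor
      · intro h ρ
        rw [← Fin.snoc_init_self ρ]
        exact (hstep _).1 (h _) _
      · intro h τ
        exact (hstep τ).2 fun d => h _
/-- Transform an interpretation by post-composing atom values with `h`. -/
def Interp.mapVal (I : Interp L V) (h : ℝ → ℝ) (hmem : ∀ x ∈ V, h x ∈ V) :
    Interp L V where
  Dom := I.Dom
  dom_nonempty := I.dom_nonempty
  funMap := I.funMap
  relVal := fun {k} R v => h (I.relVal R v)
  relVal_mem := fun {k} R v => hmem _ (I.relVal_mem R v)

lemma Term.eval_mapVal (I : Interp L V) (h : ℝ → ℝ) (hmem : ∀ x ∈ V, h x ∈ V)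
    {α : Type} (v : α → I.Dom) (t : Term L α) :
    Term.eval (I.mapVal h hmem) v t = Term.eval I v t := by
  induction t with
  | var i => rfl
  | func g ts ih =>
      show I.funMap g _ = I.funMap g _
      congr 1; funext j; exact ih j

lemma mapVal_val (hV : GodelSet V) (I : Interp L V) (h : ℝ → ℝ)
    (hmem : ∀ x ∈ V, h x ∈ V)
    (hmono : Monotone h) (h0 : h 0 = 0) (h1 : h 1 = 1)
    (himp : ∀ a b : ℝ, b < a → h a ≤ h b → h b = 1)
    (hInf : ∀ S : Set ℝ, S ⊆ V → S.Nonempty → h (sInf S) = sInf (h '' S))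
    (hSup : ∀ S : Set ℝ, S ⊆ V → S.Nonempty → h (sSup S) = sSup (h '' S)) :
    ∀ {n} (A : Form L n), DeltaFree A → ∀ (ρ : Fin n → I.Dom),
      Form.val (I.mapVal h hmem) A ρ = h (Form.val I A ρ) := by
  intro n A
  induction A with
  | falsum => intro _ ρ; simp [Form.val, h0]
  | atom R ts =>
      intro _ ρ
      show (I.mapVal h hmem).relVal R _ = _
      show h (I.relVal R _) = h (I.relVal R _)
      congr 2; funext j; exact Term.eval_mapVal I h hmem ρ (ts j)
  | conj A B ihA ihB =>
      intro hd ρ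
      simp only [Form.val, ihA hd.1, ihB hd.2, hmono.map_min]
  | disj A B ihA ihB =>
      intro hd ρ
      simp only [Form.val, ihA hd.1, ihB hd.2, hmono.map_max]
  | impl A B ihA ihB =>
      intro hd ρ
      simp only [Form.val, ihA hd.1, ihB hd.2]
      by_cases hab : Form.val I A ρ ≤ Form.val I B ρ
      · rw [if_pos hab, if_pos (hmono hab), h1]
      · rw [if_neg hab]
        by_cases hh : h (Form.val I A ρ) ≤ h (Form.val I B ρ)
        · rw [if_pos hh, himp _ _ (lt_of_not_ge hab) hh]
        · rw [if_neg hh]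
  | delta A ih => intro hd; exact absurd hd (by simp [DeltaFree])
  | all A ih =>
      intro hd ρ
      obtain ⟨d₀⟩ := I.dom_nonempty
      have hset : {v : ℝ | ∃ d, v = Form.val (I.mapVal h hmem) A (Fin.snoc ρ d)}
          = h '' {v : ℝ | ∃ d, v = Form.val I A (Fin.snoc ρ d)} := by
        ext v
        constructor
        · rintro ⟨d, rfl⟩; exact ⟨_, ⟨d, rfl⟩, (ih hd _).symm⟩
        · rintro ⟨w, ⟨d, rfl⟩, rfl⟩; exact ⟨d, (ih hd _).symm⟩
      have hne : {v : ℝ | ∃ d, v = Form.val I A (Fin.snoc ρ d)}.Nonempty := ⟨_, d₀, rfl⟩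
      show sInf _ = h (sInf _)
      rw [hset, hInf _ (by rintro v ⟨e, rfl⟩; exact val_mem hV I A hd _) hne]
  | ex A ih =>
      intro hd ρ
      obtain ⟨d₀⟩ := I.dom_nonempty
      have hset : {v : ℝ | ∃ d, v = Form.val (I.mapVal h hmem) A (Fin.snoc ρ d)}
          = h '' {v : ℝ | ∃ d, v = Form.val I A (Fin.snoc ρ d)} := by
        ext v
        constructor
        · rintro ⟨d, rfl⟩; exact ⟨_, ⟨d, rfl⟩, (ih hd _).symm⟩
        · rintro ⟨w, ⟨d, rfl⟩, rfl⟩; exact ⟨d, (ih hd _).symm⟩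
      have hne : {v : ℝ | ∃ d, v = Form.val I A (Fin.snoc ρ d)}.Nonempty := ⟨_, d₀, rfl⟩
      show sSup _ = h (sSup _)
      rw [hset, hSup _ (by rintro v ⟨e, rfl⟩; exact val_mem hV I A hd _) hne]
lemma exists_collapse (hV : GodelSet V) :
    ∃ (ω : ℝ) (h : ℝ → ℝ), 0 < ω ∧ ω < 1 ∧ (∀ x ∈ V, h x ∈ V) ∧ Monotone h ∧
      h 0 = 0 ∧ h 1 = 1 ∧ (∀ a b : ℝ, b < a → h a ≤ h b → h b = 1) ∧
      (∀ S : Set ℝ, S ⊆ V → S.Nonempty → h (sInf S) = sInf (h '' S)) ∧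
      (∀ S : Set ℝ, S ⊆ V → S.Nonempty → h (sSup S) = sSup (h '' S)) ∧
      (∀ x : ℝ, ω < x → h x = 1) := by
  by_cases hgap : ∃ ω : ℝ, 0 < ω ∧ ω < 1 ∧ ω ∉ V
  · obtain ⟨ω, hω0, hω1, hωV⟩ := hgap
    refine ⟨ω, fun x => if x ≤ ω then x else 1, hω0, hω1, ?_, ?_, ?_, ?_, ?_, ?_, ?_, ?_⟩
    · intro x hx
      by_cases hle : x ≤ ω
      · simpa [hle] using hx
      · simpa [hle] using hV.2.2.2
    · intro a b hab
      by_cases ha : a ≤ ω <;> by_cases hb : b ≤ ω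
      · simpa [ha, hb] using hab
      · simp only [if_pos ha, if_neg hb]; linarith
      · exact absurd (le_trans hab hb) ha
      · simp only [if_neg ha, if_neg hb]; exact le_rfl
    · simp [hω0.le]
    · simp [not_le.mpr hω1]
    · intro a b hba hh
      dsimp only at hh
      by_cases hb : b ≤ ω
      · exfalso
        by_cases ha : a ≤ ω
        · rw [if_pos ha, if_pos hb] at hh; linarith
        · rw [if_neg ha, if_pos hb] at hh; linarith
      · simp [hb]
    · -- inf
      intro S hSV hne
      dsimp only
      have hm : sInf S ∈ V := csInf_mem_of_subset hV hSV hne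
      have hbb : BddBelow S := ⟨0, fun x hx => (hV.2.1 (hSV hx)).1⟩
      have hibb : BddBelow ((fun x => if x ≤ ω then x else 1) '' S) := by
        refine ⟨0, ?_⟩
        rintro y ⟨z, hzS, rfl⟩
        by_cases hz : z ≤ ω
        · simpa [hz] using (hV.2.1 (hSV hzS)).1
        · simp [hz]
      by_cases hle : sInf S ≤ ω
      · have hlt : sInf S < ω := lt_of_le_of_ne hle (fun he => hωV (he ▸ hm))
        rw [if_pos hle]
        refine le_antisymm ?_ ?_
        · refine le_csInf (hne.image _) ?_
          rintro y ⟨z, hzS, rfl⟩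
          by_cases hz : z ≤ ω
          · simpa [hz] using csInf_le hbb hzS
          · simp only [if_neg hz]
            linarith [csInf_le hbb hzS]
        · by_contra hcon
          push_neg at hcon
          obtain ⟨x, hxS, hx⟩ := exists_lt_of_csInf_lt hne (lt_min hcon hlt)
          have hx1 : x ≤ ω := (lt_of_lt_of_le hx (min_le_right _ _)).le
          have hmem' : sInf ((fun x => if x ≤ ω then x else 1) '' S) ≤ x :=
            csInf_le hibb ⟨x, hxS, by simp [hx1]⟩
          have h2 : x < sInf ((fun x => if x ≤ ω then x else 1) '' S) :=
            lt_of_lt_of_le hx (min_le_left _ _)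
          linarith
      · rw [if_neg hle]
        push_neg at hle
        have himg : (fun x => if x ≤ ω then x else 1) '' S = {1} := by
          ext y
          simp only [Set.mem_image, Set.mem_singleton_iff]
          constructor
          · rintro ⟨z, hzS, rfl⟩
            have hz : ¬ z ≤ ω := fun hz =>
              absurd (le_trans (csInf_le hbb hzS) hz) (not_le.mpr hle)
            simp [hz]
          · intro hy
            obtain ⟨z, hzS⟩ := id hne
            have hz : ¬ z ≤ ω := fun hz =>
              absurd (le_trans (csInf_le hbb hzS) hz) (not_le.mpr hle)
            exact ⟨z, hzS, by simp [hz, hy]⟩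
        rw [himg, csInf_singleton]
    · -- sup
      intro S hSV hne
      dsimp only
      have hba : BddAbove S := ⟨1, fun x hx => (hV.2.1 (hSV hx)).2⟩
      have hiba : BddAbove ((fun x => if x ≤ ω then x else 1) '' S) := by
        refine ⟨1, ?_⟩
        rintro y ⟨z, hzS, rfl⟩
        by_cases hz : z ≤ ω
        · simpa [hz] using (hV.2.1 (hSV hzS)).2
        · simp [hz]
      by_cases hle : sSup S ≤ ω
      · rw [if_pos hle]
        have himg : (fun x => if x ≤ ω then x else 1) '' S = S := by
          ext y
          simp only [Set.mem_image]
          constructor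
          · rintro ⟨z, hzS, rfl⟩
            have hz : z ≤ ω := le_trans (le_csSup hba hzS) hle
            simpa [hz] using hzS
          · intro hy
            have hz : y ≤ ω := le_trans (le_csSup hba hy) hle
            exact ⟨y, hy, by simp [hz]⟩
        rw [himg]
      · rw [if_neg hle]
        push_neg at hle
        refine le_antisymm ?_ ?_
        · obtain ⟨z, hzS, hz⟩ := exists_lt_of_lt_csSup hne hle
          exact le_csSup hiba ⟨z, hzS, by simp [not_le.mpr hz]⟩
        · refine csSup_le (hne.image _) ?_
          rintro y ⟨z, hzS, rfl⟩
          by_cases hz : z ≤ ω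
          · simp only [if_pos hz]; linarith [(hV.2.1 (hSV hzS)).2, hz.trans hω1.le]
          · simp [hz]
    · intro x hx; simp [not_le.mpr hx]
  · -- V ⊇ (0,1)
    push_neg at hgap
    refine ⟨1/2, fun x => min (2*x) 1, by norm_num, by norm_num, ?_, ?_, ?_, ?_, ?_, ?_, ?_, ?_⟩
    · intro x hx
      obtain ⟨hx0, hx1⟩ := hV.2.1 hx
      rcases le_or_gt 1 (2*x) with hc | hc
      · simpa [min_eq_right hc] using hV.2.2.2
      · dsimp only
        rw [min_eq_left hc.le]
        rcases eq_or_lt_of_le hx0 with he | he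
        · simpa [← he] using hV.2.2.1
        · exact hgap _ (by linarith) hc
    · intro a b hab
      exact min_le_min (by linarith) le_rfl
    · norm_num
    · norm_num
    · intro a b hba hh
      rcases le_or_gt 1 (2*b) with hc | hc
      · exact min_eq_right hc
      · exfalso
        dsimp only at hh
        rw [min_eq_left hc.le] at hh
        rcases le_or_gt 1 (2*a) with hc' | hc'
        · rw [min_eq_right hc'] at hh; linarith
        · rw [min_eq_left hc'.le] at hh; linarith
    · intro S hSV hne
      have hbb : BddBelow S := ⟨0, fun x hx => (hV.2.1 (hSV hx)).1⟩
      have hcont : Continuous fun x : ℝ => min (2*x) 1 := by continuity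
      exact Monotone.map_csInf_of_continuousAt hcont.continuousAt
        (fun a b hab => min_le_min (by linarith) le_rfl) hne hbb
    · intro S hSV hne
      have hba : BddAbove S := ⟨1, fun x hx => (hV.2.1 (hSV hx)).2⟩
      have hcont : Continuous fun x : ℝ => min (2*x) 1 := by continuity
      exact Monotone.map_csSup_of_continuousAt hcont.continuousAt
        (fun a b hab => min_le_min (by linarith) le_rfl) hne hba
    · intro x hx
      dsimp only
      rw [min_eq_right (by linarith)]
lemma val_skolem {n : ℕ} (J : Interp (L.addFunc n) V) (F : Form L (n+1))
    (ρ : Fin n → J.Dom) :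
    Form.val J (Form.subst
        (Fin.lastCases (Term.func (newFunc L n) (fun j => Term.var j))
          (fun i => Term.var i))
        (Form.emb (a := n) F)) ρ
      = Form.val J.reduct F (Fin.snoc ρ (J.funMap (newFunc L n) ρ)) := by
  rw [Form.val_subst, Form.val_emb]
  congr 1
  funext i
  refine Fin.lastCases ?_ (fun j => ?_) i
  · simp only [Fin.lastCases_last, Fin.snoc_last]
    exact (Fin.snoc_last (α := fun _ => J.Dom) ..).symm
  · simp only [Fin.lastCases_castSucc, Fin.snoc_castSucc]
    exact (Fin.snoc_castSucc (α := fun _ => J.Dom) ..).symm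

end Aux

/-- Prenex sentences admit validity-equivalent and
1-satisfiability-equivalent standard Skolemizations. For an `L`-formula
`F(x₁,…,xₙ,y)` (free variables `Fin (n+1)`, `y` the last) and a new `n`-ary
function symbol `f`:
(1) `∃x̄∀y F(x̄,y)` is valid in `G_V` (over `L`-interpretations) iff
`∃x̄ F(x̄,f(x̄))` is valid in `G_V` over interpretations of `L ∪ {f}`;
(2) `∀x̄∃y F(x̄,y)` is 1-satisfiable in `G_V` iff `∀x̄ F(x̄,f(x̄))` is
1-satisfiable in `G_V` over the extended language. -/
theorem stmt_19 {L : Lang} {V : Set ℝ} (hV : GodelSet V) (n : ℕ)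
    (F : Form L (n+1)) (hF : DeltaFree F) :
    (Valid V (Form.exN n (Form.all F)) ↔
      Valid V (Form.exN n (Form.subst
        (Fin.lastCases (Term.func (newFunc L n) (fun j => Term.var j))
          (fun i => Term.var i))
        (Form.emb (a := n) F)))) ∧
    (OneSat V (Form.allN n (Form.ex F)) ↔
      OneSat V (Form.allN n (Form.subst
        (Fin.lastCases (Term.func (newFunc L n) (fun j => Term.var j))
          (fun i => Term.var i))
        (Form.emb (a := n) F)))) := by
  obtain ⟨hclosed, hsub, h0V, h1V⟩ := hV
  have hV : GodelSet V := ⟨hclosed, hsub, h0V, h1V⟩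
  constructor
  · -- (1) validity
    constructor
    · intro hval J
      haveI : Nonempty J.Dom := J.dom_nonempty
      haveI : Nonempty J.reduct.Dom := J.dom_nonempty
      refine le_antisymm ?_ ?_
      · rw [sval_exN]
        exact supN_le fun ρ => (val_bounds hV J _ ρ).2
      · have h1 := hval J.reduct
        rw [sval_exN] at h1
        rw [sval_exN, ← h1]
        refine supN_mono (fun ρ => (val_bounds hV J _ ρ).2) (fun ρ => ?_)
        rw [val_skolem J F ρ]
        show Form.val J.reduct (Form.all F) ρ ≤ _
        rw [Form.val]
        refine csInf_le ⟨0, ?_⟩ ⟨J.funMap (newFunc L n) ρ, rfl⟩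
        rintro v ⟨d, rfl⟩
        exact (val_bounds hV J.reduct F _).1
    · intro hval I
      haveI : Nonempty I.Dom := I.dom_nonempty
      by_contra hne1
      set c := Form.sval I (Form.exN n (Form.all F)) with hc
      have hcb : c ≤ 1 := by
        rw [hc, sval_exN]
        exact supN_le fun ρ => (val_bounds hV I _ ρ).2
      have hclt : c < 1 := lt_of_le_of_ne hcb hne1
      have hex : ∀ ρ : Fin n → I.Dom, ∃ d : I.Dom,
          Form.val I F (Fin.snoc ρ d) < (1+c)/2 := by
        intro ρ
        have h1 : Form.val I (Form.all F) ρ ≤ c := by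
          rw [hc, sval_exN]
          exact le_supN (fun τ => (val_bounds hV I _ τ).2) ρ
        have h2 : Form.val I (Form.all F) ρ < (1+c)/2 := by linarith
        rw [Form.val] at h2
        have hne : {v : ℝ | ∃ d : I.Dom, v = Form.val I F (Fin.snoc ρ d)}.Nonempty :=
          ⟨_, Classical.arbitrary I.Dom, rfl⟩
        obtain ⟨v, ⟨d, rfl⟩, hv⟩ := exists_lt_of_csInf_lt hne h2
        exact ⟨d, hv⟩
      choose g hg using hex
      haveI : Nonempty (I.expand g).Dom := I.dom_nonempty
      have h2 := hval (I.expand g)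
      rw [sval_exN] at h2
      have h3 : supN (I.expand g).Dom n
          (fun ρ => Form.val (I.expand g) (Form.subst
            (Fin.lastCases (Term.func (newFunc L n) (fun j => Term.var j))
              (fun i => Term.var i)) (Form.emb (a := n) F)) ρ) ≤ (1+c)/2 := by
        refine supN_le fun ρ => ?_
        rw [val_skolem (I.expand g) F ρ]
        exact (hg ρ).le
      rw [h2] at h3
      linarith
  · -- (2) 1-satisfiability
    constructor
    · rintro ⟨I, hI⟩
      haveI : Nonempty I.Dom := I.dom_nonempty
      rw [sval_allN] at hI
      have hall : ∀ ρ : Fin n → I.Dom, Form.val I (Form.ex F) ρ = 1 :=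
        (infN_eq_one_iff (fun ρ => (val_bounds hV I _ ρ).1)
          (fun ρ => (val_bounds hV I _ ρ).2)).1 hI
      obtain ⟨ω, h, hω0, hω1, hmem, hmono, hh0, hh1, himp, hInf, hSup, hcol⟩ :=
        exists_collapse hV
      have hwit : ∀ ρ : Fin n → I.Dom, ∃ d : I.Dom,
          ω < Form.val I F (Fin.snoc ρ d) := by
        intro ρ
        have h1 := hall ρ
        rw [Form.val] at h1
        have h2 : ω < sSup {v : ℝ | ∃ d : I.Dom, v = Form.val I F (Fin.snoc ρ d)} :=
          h1 ▸ hω1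
        have hne : {v : ℝ | ∃ d : I.Dom, v = Form.val I F (Fin.snoc ρ d)}.Nonempty :=
          ⟨_, Classical.arbitrary I.Dom, rfl⟩
        obtain ⟨v, ⟨d, rfl⟩, hv⟩ := exists_lt_of_lt_csSup hne h2
        exact ⟨d, hv⟩
      choose g hg using hwit
      have hdf : DeltaFree (Form.subst
          (Fin.lastCases (Term.func (newFunc L n) (fun j => Term.var j))
            (fun i => Term.var i)) (Form.emb (a := n) F)) :=
        deltaFree_subst _ _ (deltaFree_emb F hF)
      refine ⟨(I.expand g).mapVal h hmem, ?_⟩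
      rw [sval_allN]
      haveI : Nonempty ((I.expand g).mapVal h hmem).Dom := I.dom_nonempty
      rw [infN_eq_one_iff (fun ρ => (val_bounds hV _ _ ρ).1)
        (fun ρ => (val_bounds hV _ _ ρ).2)]
      intro ρ
      rw [mapVal_val hV (I.expand g) h hmem hmono hh0 hh1 himp hInf hSup _ hdf ρ]
      rw [val_skolem (I.expand g) F ρ]
      exact hcol _ (hg ρ)
    · rintro ⟨J, hJ⟩
      haveI : Nonempty J.Dom := J.dom_nonempty
      rw [sval_allN] at hJ
      have hall := (infN_eq_one_iff (fun ρ => (val_bounds hV J _ ρ).1)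
        (fun ρ => (val_bounds hV J _ ρ).2)).1 hJ
      haveI : Nonempty J.reduct.Dom := J.dom_nonempty
      refine ⟨J.reduct, ?_⟩
      rw [sval_allN, infN_eq_one_iff (fun ρ => (val_bounds hV J.reduct _ ρ).1)
        (fun ρ => (val_bounds hV J.reduct _ ρ).2)]
      intro ρ
      have h1 : Form.val J.reduct F (Fin.snoc ρ (J.funMap (newFunc L n) ρ)) = 1 := by
        rw [← val_skolem J F ρ]
        exact hall ρ
      show Form.val J.reduct (Form.ex F) ρ = 1
      rw [Form.val]
      refine le_antisymm ?_ ?_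
      · refine csSup_le ⟨_, Classical.arbitrary J.Dom, rfl⟩ ?_
        rintro v ⟨d, rfl⟩
        exact (val_bounds hV J.reduct F _).2
      · rw [← h1]
        refine le_csSup ⟨1, ?_⟩ ⟨J.funMap (newFunc L n) ρ, rfl⟩
        rintro v ⟨d, rfl⟩
        exact (val_bounds hV J.reduct F _).2


end GodelPaper
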